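/- In the DMS simulation of a two-counter Minsky machine using two unary relations C₁, C₂ and nullary state relations S_q, a configuration ⟨q, V⟩ of the machine is reachable from ⟨q₀, V₀⟩ (with V₀ ≡ 0) if and only if the DMS can reach a configuration ⟨I, H⟩ with S_q ∈ I, |C₁^I| = V(1), and |C₂^I| = V(2). In particular, control state q_f is reachable in the machine iff proposition S_{q_f} is reachable in the DMS. -/

import Mathlib

universe u v w

/-- A relational schema: a collection of relation names with arities. -/
structure Schema (Rel : Type u) where
  ar : Rel → ℕ

/-- A fact over a schema `S` and a carrier `C`: a relation name together with a
tuple of the correct arity. -/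
abbrev DBFact {Rel : Type u} (S : Schema Rel) (C : Type w) := Σ R : Rel, Fin (S.ar R) → C

/-- A database instance over schema `S` and carrier `C`: a set of facts. -/
abbrev DBInst {Rel : Type u} (S : Schema Rel) (C : Type w) := Set (DBFact S C)

/-- The active domain of a database instance. -/
def adom {Rel : Type u} {Δ : Type w} (S : Schema Rel) (I : DBInst S Δ) : Set Δ :=
  {e | ∃ fa ∈ I, ∃ i, fa.2 i = e}

/-- Substituting a substitution `σ` in a database instance over variables. -/
def substDB {Rel : Type u} {Var : Type v} {Δ : Type w} (S : Schema Rel)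
    (σ : Var → Δ) (J : DBInst S Var) : DBInst S Δ :=
  (fun fa : DBFact S Var => (⟨fa.1, fun i => σ (fa.2 i)⟩ : DBFact S Δ)) '' J

/-- A (guarded) DMS action: action parameters `ū`, fresh-input variables `v̄`
(listed in order), a guard (given semantically, as the satisfaction relation of
an `FOL(R)` query on an instance under a substitution), and variable-instances
`Del` and `Add`. -/
structure DMSAction {Rel : Type u} (S : Schema Rel) (Var : Type v) (Δ : Type w) where
  params : Set Var
  fresh : List Var
  guard : DBInst S Δ → (Var → Δ) → Prop
  Del : DBInst S Var
  Add : DBInst S Var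

/-- The set of fresh-input variables of an action. -/
def freshSet {Rel : Type u} {Var : Type v} {Δ : Type w} {S : Schema Rel}
    (α : DMSAction S Var Δ) : Set Var := {v | v ∈ α.fresh}

/-- Well-formedness: every variable occurring in `Add` is an action parameter or
a fresh-input variable. -/
def AddVarsOK {Rel : Type u} {Var : Type v} {Δ : Type w} {S : Schema Rel}
    (α : DMSAction S Var Δ) : Prop :=
  ∀ fa ∈ α.Add, ∀ k, fa.2 k ∈ α.params ∪ freshSet α

/-- Well-formedness: every fresh-input variable occurs in some fact of `Add`
(`v̄ ⊆ adom(Add)`). -/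
def FreshInAdd {Rel : Type u} {Var : Type v} {Δ : Type w} {S : Schema Rel}
    (α : DMSAction S Var Δ) : Prop :=
  ∀ v ∈ α.fresh, ∃ fa ∈ α.Add, ∃ k, fa.2 k = v

/-- The DMS transition relation `⟨I,H⟩ →^{α:σ} ⟨I',H'⟩`: `σ` is an instantiating
substitution for `α` at `⟨I,H⟩` (parameters into the active domain, fresh-input
variables injectively to history-fresh values, guard satisfied),
`I' = (I − σ(Del)) + σ(Add)` and `H' = H ∪ σ(v̄)`. -/
def Step {Rel : Type u} {Var : Type v} {Δ : Type w} (S : Schema Rel)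
    (α : DMSAction S Var Δ) (σ : Var → Δ)
    (I : DBInst S Δ) (H : Set Δ) (I' : DBInst S Δ) (H' : Set Δ) : Prop :=
  (∀ u ∈ α.params, σ u ∈ adom S I) ∧
  (∀ v ∈ α.fresh, σ v ∉ H) ∧
  Set.InjOn σ (freshSet α) ∧
  α.guard I σ ∧
  I' = (I \ substDB S σ α.Del) ∪ substDB S σ α.Add ∧
  H' = H ∪ σ '' freshSet α

/-- A database-manipulating system: an initial instance and a set of actions. -/
structure DMS {Rel : Type u} (S : Schema Rel) (Var : Type v) (Δ : Type w) where
  I0 : DBInst S Δ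
  acts : Set (DMSAction S Var Δ)

/-- Reachability of a configuration in the configuration graph of a DMS,
starting from the initial configuration `⟨I₀, ∅⟩`. -/
def DMSReach {Rel : Type u} {Var : Type v} {Δ : Type w} {S : Schema Rel}
    (M : DMS S Var Δ) : DBInst S Δ × Set Δ → Prop :=
  Relation.ReflTransGen
    (fun c c' => ∃ α ∈ M.acts, ∃ σ : Var → Δ, Step S α σ c.1 c.2 c'.1 c'.2)
    (M.I0, ∅)

/-! ### Two-counter Minsky machines -/

/-- Counter-machine operations. -/
inductive CMOp | inc | dec | ifz

/-- A two-counter Minsky machine: an initial state and a set of instructions. -/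
structure CM (Q : Type*) where
  q0 : Q
  prog : Set (Q × CMOp × Fin 2 × Q)

/-- One step of a two-counter machine on configurations `⟨q, V⟩`. -/
def CMStep {Q : Type*} (M : CM Q) (c c' : Q × (Fin 2 → ℕ)) : Prop :=
  ∃ i : Fin 2,
    ((c.1, CMOp.inc, i, c'.1) ∈ M.prog ∧
      c'.2 = Function.update c.2 i (c.2 i + 1)) ∨
    ((c.1, CMOp.dec, i, c'.1) ∈ M.prog ∧ 0 < c.2 i ∧
      c'.2 = Function.update c.2 i (c.2 i - 1)) ∨
    ((c.1, CMOp.ifz, i, c'.1) ∈ M.prog ∧ c.2 i = 0 ∧ c'.2 = c.2)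

/-- Reachability between configurations of a two-counter machine. -/
def CMReach {Q : Type*} (M : CM Q) : (Q × (Fin 2 → ℕ)) → (Q × (Fin 2 → ℕ)) → Prop :=
  Relation.ReflTransGen (CMStep M)

/-! ### The simulating DMS -/

/-- Schema of the simulating DMS: two unary relations `C₁, C₂` (the counters)
and one nullary relation `S_q` per control state `q`. -/
inductive RName (Q : Type*)
  | C : Fin 2 → RName Q
  | S : Q → RName Q

/-- Arities: counters are unary, state relations are nullary. -/
def arCM {Q : Type*} : RName Q → ℕ
  | RName.C _ => 1
  | RName.S _ => 0

/-- The schema of the simulating DMS. -/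
def schemaCM (Q : Type*) : Schema (RName Q) := ⟨arCM⟩

/-- The nullary fact `S_q()`. -/
def Sfact {Q : Type*} {C : Type*} (q : Q) : DBFact (schemaCM Q) C :=
  ⟨RName.S q, fun i => i.elim0⟩

/-- The unary fact `C_i(e)`. -/
def Cfact {Q : Type*} {C : Type*} (i : Fin 2) (e : C) : DBFact (schemaCM Q) C :=
  ⟨RName.C i, fun _ => e⟩

/-- Action for instruction `⟨q, inc, i, q'⟩`:
`⟨∅, {v}, S_q, {S_q}, {C_i(v), S_{q'}}⟩`. -/
def incAct {Q : Type*} (q : Q) (i : Fin 2) (q' : Q) : DMSAction (schemaCM Q) ℕ ℕ where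
  params := ∅
  fresh := [0]
  guard := fun I _ => Sfact q ∈ I
  Del := {Sfact q}
  Add := {Cfact i (0 : ℕ), Sfact q'}

/-- Action for instruction `⟨q, dec, i, q'⟩`:
`⟨{u}, ∅, S_q ∧ C_i(u), {C_i(u), S_q}, {S_{q'}}⟩`. -/
def decAct {Q : Type*} (q : Q) (i : Fin 2) (q' : Q) : DMSAction (schemaCM Q) ℕ ℕ where
  params := {0}
  fresh := []
  guard := fun I σ => Sfact q ∈ I ∧ Cfact i (σ 0) ∈ I
  Del := {Cfact i (0 : ℕ), Sfact q}
  Add := {Sfact q'}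

/-- Action for instruction `⟨q, ifz, i, q'⟩`:
`⟨∅, ∅, S_q ∧ ¬∃u.C_i(u), {S_q}, {S_{q'}}⟩`. -/
def ifzAct {Q : Type*} (q : Q) (i : Fin 2) (q' : Q) : DMSAction (schemaCM Q) ℕ ℕ where
  params := ∅
  fresh := []
  guard := fun I _ => Sfact q ∈ I ∧ ∀ e : ℕ, Cfact i e ∉ I
  Del := {Sfact q}
  Add := {Sfact q'}

/-- The DMS `S_M` simulating the two-counter machine `M`, with initial instance
`{S_{q₀}}`. -/
def dmsOfCM {Q : Type*} (M : CM Q) : DMS (schemaCM Q) ℕ ℕ where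
  I0 := {Sfact M.q0}
  acts := {a | ∃ (q : Q) (q' : Q) (i : Fin 2),
    ((q, CMOp.inc, i, q') ∈ M.prog ∧ a = incAct q i q') ∨
    ((q, CMOp.dec, i, q') ∈ M.prog ∧ a = decAct q i q') ∨
    ((q, CMOp.ifz, i, q') ∈ M.prog ∧ a = ifzAct q i q')}


section Helpers

variable {Q : Type*}

@[simp] theorem Sfact_eq_iff {C : Type*} {q q' : Q} :
    (Sfact q : DBFact (schemaCM Q) C) = Sfact q' ↔ q = q' := by
  constructor
  · intro h
    have := congrArg Sigma.fst h
    simpa [Sfact] using this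
  · rintro rfl; rfl

@[simp] theorem Cfact_eq_iff {C : Type*} {i j : Fin 2} {e e' : C} :
    (Cfact i e : DBFact (schemaCM Q) C) = Cfact j e' ↔ i = j ∧ e = e' := by
  constructor
  · intro h
    have h1 : i = j := by
      have := congrArg Sigma.fst h
      simpa [Cfact] using this
    subst h1
    refine ⟨rfl, ?_⟩
    rw [Cfact, Cfact] at h
    injection h with h1 h2
    exact congrFun h2 ⟨0, by simp [schemaCM, arCM]⟩
  · rintro ⟨rfl, rfl⟩; rfl

@[simp] theorem Sfact_ne_Cfact {C : Type*} {q : Q} {i : Fin 2} {e : C} :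
    (Sfact q : DBFact (schemaCM Q) C) ≠ Cfact i e := by
  intro h
  have := congrArg Sigma.fst h
  simp [Sfact, Cfact] at this

@[simp] theorem Cfact_ne_Sfact {C : Type*} {q : Q} {i : Fin 2} {e : C} :
    (Cfact i e : DBFact (schemaCM Q) C) ≠ Sfact q := fun h => Sfact_ne_Cfact h.symm

theorem substF_Sfact (σ : ℕ → ℕ) (q : Q) :
    (⟨(Sfact q : DBFact (schemaCM Q) ℕ).1, fun i => σ ((Sfact q : DBFact (schemaCM Q) ℕ).2 i)⟩ :
      DBFact (schemaCM Q) ℕ) = Sfact q := by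
  refine Sigma.ext rfl (heq_of_eq (funext fun i => ?_))
  exact i.elim0

theorem substF_Cfact (σ : ℕ → ℕ) (i : Fin 2) (e : ℕ) :
    (⟨(Cfact i e : DBFact (schemaCM Q) ℕ).1, fun k => σ ((Cfact i e : DBFact (schemaCM Q) ℕ).2 k)⟩ :
      DBFact (schemaCM Q) ℕ) = Cfact i (σ e) := rfl

theorem substDB_singleton_S (σ : ℕ → ℕ) (q : Q) :
    substDB (schemaCM Q) σ {Sfact q} = {Sfact q} := by
  rw [substDB, Set.image_singleton, substF_Sfact]

theorem substDB_singleton_S' (σ : ℕ → ℕ) (q : Q) :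
    substDB (schemaCM Q) σ ({Sfact q} : DBInst (schemaCM Q) ℕ) = {Sfact q} :=
  substDB_singleton_S σ q

theorem substDB_inc_add (σ : ℕ → ℕ) (i : Fin 2) (q' : Q) :
    substDB (schemaCM Q) σ ({Cfact i 0, Sfact q'} : DBInst (schemaCM Q) ℕ)
      = {Cfact i (σ 0), Sfact q'} := by
  rw [substDB, Set.image_insert_eq, Set.image_singleton, substF_Cfact, substF_Sfact]

theorem substDB_dec_del (σ : ℕ → ℕ) (i : Fin 2) (q : Q) :
    substDB (schemaCM Q) σ ({Cfact i 0, Sfact q} : DBInst (schemaCM Q) ℕ)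
      = {Cfact i (σ 0), Sfact q} := substDB_inc_add σ i q

theorem freshSet_inc (q : Q) (i : Fin 2) (q' : Q) :
    freshSet (incAct q i q') = {0} := by
  ext v; simp [freshSet, incAct]

theorem freshSet_dec (q : Q) (i : Fin 2) (q' : Q) :
    freshSet (decAct q i q') = (∅ : Set ℕ) := by
  ext v; simp [freshSet, decAct]

theorem freshSet_ifz (q : Q) (i : Fin 2) (q' : Q) :
    freshSet (ifzAct q i q') = (∅ : Set ℕ) := by
  ext v; simp [freshSet, ifzAct]

end Helpers


section Good

variable {Q : Type*}

/-- Structural invariant of instances in the simulating DMS. -/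
def Good (q : Q) (V : Fin 2 → ℕ) (I : DBInst (schemaCM Q) ℕ) (H : Set ℕ) : Prop :=
  (∀ q', Sfact q' ∈ I ↔ q' = q) ∧
  (∀ i, {e : ℕ | Cfact i e ∈ I}.Finite) ∧
  (∀ i, {e : ℕ | Cfact i e ∈ I}.ncard = V i) ∧
  H.Finite ∧
  (∀ i e, Cfact i e ∈ I → e ∈ H)

theorem good_init (q0 : Q) :
    Good q0 (fun _ => 0) ({Sfact q0} : DBInst (schemaCM Q) ℕ) (∅ : Set ℕ) := by
  refine ⟨fun q' => by simp, ?_, ?_, Set.finite_empty, by simp⟩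
  · intro i
    have : {e : ℕ | Cfact i e ∈ ({Sfact q0} : DBInst (schemaCM Q) ℕ)} = ∅ := by
      ext e; simp
    simp [this]
  · intro i
    have : {e : ℕ | Cfact i e ∈ ({Sfact q0} : DBInst (schemaCM Q) ℕ)} = ∅ := by
      ext e; simp
    simp [this]

theorem good_inc {q : Q} {V : Fin 2 → ℕ} {I : DBInst (schemaCM Q) ℕ} {H : Set ℕ}
    (hG : Good q V I H) {e : ℕ} (he : e ∉ H) (q' : Q) (i : Fin 2) :
    Good q' (Function.update V i (V i + 1))
      ((I \ {Sfact q}) ∪ {Cfact i e, Sfact q'}) (H ∪ {e}) := by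
  obtain ⟨hS, hFin, hCard, hHFin, hCH⟩ := hG
  have hset : ∀ j, {e' : ℕ | Cfact j e' ∈ (I \ {Sfact q}) ∪ {Cfact i e, Sfact q'}} =
      {e' : ℕ | Cfact j e' ∈ I} ∪ {e' : ℕ | j = i ∧ e' = e} := by
    intro j; ext e'
    simp only [Set.mem_union, Set.mem_diff, Set.mem_insert_iff, Set.mem_singleton_iff,
      Set.mem_setOf_eq, Cfact_ne_Sfact, Cfact_eq_iff, not_false_iff, and_true, or_false]
  refine ⟨?_, ?_, ?_, hHFin.union (Set.finite_singleton e), ?_⟩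
  · intro q''
    simp only [Set.mem_union, Set.mem_diff, Set.mem_insert_iff, Set.mem_singleton_iff,
      Sfact_ne_Cfact, Sfact_eq_iff, hS q'', false_or]
    tauto
  · intro j
    rw [hset j]
    rcases eq_or_ne j i with rfl | hne
    · have : {e' : ℕ | j = j ∧ e' = e} = {e} := by ext e'; simp
      rw [this]
      exact (hFin j).union (Set.finite_singleton e)
    · have : {e' : ℕ | j = i ∧ e' = e} = ∅ := by ext e'; simp [hne]
      rw [this]
      simpa using hFin j
  · intro j
    rw [hset j]
    rcases eq_or_ne j i with rfl | hne
    · have h1 : {e' : ℕ | j = j ∧ e' = e} = {e} := by ext e'; simp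
      rw [h1, Set.union_singleton,
        Set.ncard_insert_of_notMem (s := {e' : ℕ | Cfact j e' ∈ I})
          (fun hc => he (hCH j e hc)) (hFin j), hCard j, Function.update_self]
    · have h1 : {e' : ℕ | j = i ∧ e' = e} = ∅ := by ext e'; simp [hne]
      rw [h1, Set.union_empty, hCard j, Function.update_of_ne hne]
  · intro j e' h
    have h2 : e' ∈ {e'' : ℕ | Cfact j e'' ∈ I} ∪ {e'' : ℕ | j = i ∧ e'' = e} := by
      rw [← hset j]; exact h
    rcases h2 with h | h
    · exact Or.inl (hCH j e' h)
    · exact Or.inr h.2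

theorem good_dec {q : Q} {V : Fin 2 → ℕ} {I : DBInst (schemaCM Q) ℕ} {H : Set ℕ}
    (hG : Good q V I H) {e : ℕ} {i : Fin 2} (he : Cfact i e ∈ I) (q' : Q) :
    Good q' (Function.update V i (V i - 1))
      ((I \ {Cfact i e, Sfact q}) ∪ {Sfact q'}) H := by
  obtain ⟨hS, hFin, hCard, hHFin, hCH⟩ := hG
  have hset : ∀ j, {e' : ℕ | Cfact j e' ∈ (I \ {Cfact i e, Sfact q}) ∪ {Sfact q'}} =
      {e' : ℕ | Cfact j e' ∈ I} \ {e' : ℕ | j = i ∧ e' = e} := by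
    intro j; ext e'
    simp only [Set.mem_union, Set.mem_diff, Set.mem_insert_iff, Set.mem_singleton_iff,
      Set.mem_setOf_eq, Cfact_ne_Sfact, Cfact_eq_iff, or_false, not_or, not_and]
  refine ⟨?_, ?_, ?_, hHFin, ?_⟩
  · intro q''
    simp only [Set.mem_union, Set.mem_diff, Set.mem_insert_iff, Set.mem_singleton_iff,
      Sfact_ne_Cfact, Sfact_eq_iff, hS q'', false_or, not_or]
    tauto
  · intro j
    rw [hset j]
    exact (hFin j).diff
  · intro j
    rw [hset j]
    rcases eq_or_ne j i with rfl | hne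
    · have h1 : {e' : ℕ | j = j ∧ e' = e} = {e} := by ext e'; simp
      rw [h1, Set.ncard_diff_singleton_of_mem (s := {e' : ℕ | Cfact j e' ∈ I}) he, hCard j, Function.update_self]
    · have h1 : {e' : ℕ | j = i ∧ e' = e} = ∅ := by ext e'; simp [hne]
      rw [h1, Set.diff_empty, hCard j, Function.update_of_ne hne]
  · intro j e' h
    have h2 : e' ∈ {e'' : ℕ | Cfact j e'' ∈ I} \ {e'' : ℕ | j = i ∧ e'' = e} := by
      rw [← hset j]; exact h
    exact hCH j e' h2.1

theorem good_ifz {q : Q} {V : Fin 2 → ℕ} {I : DBInst (schemaCM Q) ℕ} {H : Set ℕ}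
    (hG : Good q V I H) (q' : Q) :
    Good q' V ((I \ {Sfact q}) ∪ {Sfact q'}) H := by
  obtain ⟨hS, hFin, hCard, hHFin, hCH⟩ := hG
  have hset : ∀ j, {e' : ℕ | Cfact j e' ∈ (I \ {Sfact q}) ∪ {Sfact q'}} =
      {e' : ℕ | Cfact j e' ∈ I} := by
    intro j; ext e'
    simp only [Set.mem_union, Set.mem_diff, Set.mem_singleton_iff, Set.mem_setOf_eq,
      Cfact_ne_Sfact, not_false_iff, and_true, or_false]
  refine ⟨?_, fun j => by rw [hset j]; exact hFin j,
    fun j => by rw [hset j]; exact hCard j, hHFin, fun j e' h => hCH j e' (show e' ∈ {e'' : ℕ | Cfact j e'' ∈ I} by rw [← hset j]; exact h)⟩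
  intro q''
  simp only [Set.mem_union, Set.mem_diff, Set.mem_singleton_iff, Sfact_eq_iff, hS q'', false_or]
  tauto

end Good


section Main

variable {Q : Type*} (M : CM Q)

theorem step_backward {q : Q} {V : Fin 2 → ℕ} {I I' : DBInst (schemaCM Q) ℕ} {H H' : Set ℕ}
    (hG : Good q V I H) {α : DMSAction (schemaCM Q) ℕ ℕ} (hα : α ∈ (dmsOfCM M).acts)
    {σ : ℕ → ℕ} (hstep : Step (schemaCM Q) α σ I H I' H') :
    ∃ q' V', CMStep M (q, V) (q', V') ∧ Good q' V' I' H' := by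
  obtain ⟨p, p', i, hc⟩ := hα
  obtain ⟨hpar, hfr, hinj, hgd, hI', hH'⟩ := hstep
  rcases hc with ⟨hprog, rfl⟩ | ⟨hprog, rfl⟩ | ⟨hprog, rfl⟩
  · -- inc
    have hgd' : Sfact p ∈ I := hgd
    have hq : p = q := (hG.1 p).mp hgd'
    subst hq
    have hfresh : σ 0 ∉ H := hfr 0 (by simp [incAct])
    refine ⟨p', Function.update V i (V i + 1), ⟨i, Or.inl ⟨hprog, rfl⟩⟩, ?_⟩
    rw [hI', hH']
    rw [show (incAct p i p').Del = ({Sfact p} : DBInst (schemaCM Q) ℕ) from rfl,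
        show (incAct p i p').Add = ({Cfact i 0, Sfact p'} : DBInst (schemaCM Q) ℕ) from rfl,
        substDB_singleton_S, substDB_inc_add, freshSet_inc, Set.image_singleton]
    exact good_inc hG hfresh p' i
  · -- dec
    have hgd' : Sfact p ∈ I ∧ Cfact i (σ 0) ∈ I := hgd
    have hq : p = q := (hG.1 p).mp hgd'.1
    subst hq
    have hpos : 0 < V i := by
      rw [← hG.2.2.1 i]
      exact (Set.ncard_pos (hG.2.1 i)).mpr ⟨σ 0, hgd'.2⟩
    refine ⟨p', Function.update V i (V i - 1), ⟨i, Or.inr (Or.inl ⟨hprog, hpos, rfl⟩)⟩, ?_⟩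
    rw [hI', hH']
    rw [show (decAct p i p').Del = ({Cfact i 0, Sfact p} : DBInst (schemaCM Q) ℕ) from rfl,
        show (decAct p i p').Add = ({Sfact p'} : DBInst (schemaCM Q) ℕ) from rfl,
        substDB_dec_del, substDB_singleton_S, freshSet_dec, Set.image_empty, Set.union_empty]
    exact good_dec hG hgd'.2 p'
  · -- ifz
    have hgd' : Sfact p ∈ I ∧ ∀ e : ℕ, Cfact i e ∉ I := hgd
    have hq : p = q := (hG.1 p).mp hgd'.1
    subst hq
    have h0 : {e : ℕ | Cfact i e ∈ I} = ∅ := by ext e; simp [hgd'.2 e]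
    have hV0 : V i = 0 := by rw [← hG.2.2.1 i, h0, Set.ncard_empty]
    refine ⟨p', V, ⟨i, Or.inr (Or.inr ⟨hprog, hV0, rfl⟩)⟩, ?_⟩
    rw [hI', hH']
    rw [show (ifzAct p i p').Del = ({Sfact p} : DBInst (schemaCM Q) ℕ) from rfl,
        show (ifzAct p i p').Add = ({Sfact p'} : DBInst (schemaCM Q) ℕ) from rfl,
        substDB_singleton_S, substDB_singleton_S, freshSet_ifz, Set.image_empty, Set.union_empty]
    exact good_ifz hG p'

theorem step_forward {q q' : Q} {V V' : Fin 2 → ℕ}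
    (hcm : CMStep M (q, V) (q', V')) {I : DBInst (schemaCM Q) ℕ} {H : Set ℕ}
    (hG : Good q V I H) :
    ∃ I' H', (∃ α ∈ (dmsOfCM M).acts, ∃ σ : ℕ → ℕ, Step (schemaCM Q) α σ I H I' H') ∧
      Good q' V' I' H' := by
  obtain ⟨i, hc⟩ := hcm
  rcases hc with ⟨hprog, hV'⟩ | ⟨hprog, hpos, hV'⟩ | ⟨hprog, hz, hV'⟩
  · -- inc
    obtain ⟨e, he⟩ := (hG.2.2.2.1.infinite_compl).nonempty
    refine ⟨(I \ {Sfact q}) ∪ {Cfact i e, Sfact q'}, H ∪ {e},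
      ⟨incAct q i q', ⟨q, q', i, Or.inl ⟨hprog, rfl⟩⟩, fun _ => e,
        fun u hu => absurd hu (Set.notMem_empty u),
        fun v _ => he,
        by rw [freshSet_inc]; exact Set.injOn_singleton _ _,
        (hG.1 q).mpr rfl, ?_, ?_⟩, ?_⟩
    · rw [show (incAct q i q').Del = ({Sfact q} : DBInst (schemaCM Q) ℕ) from rfl,
          show (incAct q i q').Add = ({Cfact i 0, Sfact q'} : DBInst (schemaCM Q) ℕ) from rfl,
          substDB_singleton_S, substDB_inc_add]
    · rw [freshSet_inc, Set.image_singleton]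
    · have hV2 : V' = Function.update V i (V i + 1) := hV'
      rw [hV2]
      exact good_inc hG he q' i
  · -- dec
    have hpos' : 0 < {e : ℕ | Cfact i e ∈ I}.ncard := by rw [hG.2.2.1 i]; exact hpos
    obtain ⟨e, he⟩ := (Set.ncard_pos (hG.2.1 i)).mp hpos'
    refine ⟨(I \ {Cfact i e, Sfact q}) ∪ {Sfact q'}, H,
      ⟨decAct q i q', ⟨q, q', i, Or.inr (Or.inl ⟨hprog, rfl⟩)⟩, fun _ => e,
        ?_,
        fun v hv => absurd hv (by simp [decAct]),
        by rw [freshSet_dec]; exact Set.injOn_empty _,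
        ⟨(hG.1 q).mpr rfl, he⟩, ?_, ?_⟩, ?_⟩
    · intro u _
      exact ⟨Cfact i e, he, ⟨0, by simp [schemaCM, arCM, Cfact]⟩, rfl⟩
    · rw [show (decAct q i q').Del = ({Cfact i 0, Sfact q} : DBInst (schemaCM Q) ℕ) from rfl,
          show (decAct q i q').Add = ({Sfact q'} : DBInst (schemaCM Q) ℕ) from rfl,
          substDB_dec_del, substDB_singleton_S]
    · rw [freshSet_dec, Set.image_empty, Set.union_empty]
    · have hV2 : V' = Function.update V i (V i - 1) := hV'
      rw [hV2]
      exact good_dec hG he q'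
  · -- ifz
    have hempty : {e : ℕ | Cfact i e ∈ I} = ∅ :=
      (Set.ncard_eq_zero (hG.2.1 i)).mp (by rw [hG.2.2.1 i]; exact hz)
    have hnone : ∀ e : ℕ, Cfact i e ∉ I := by
      intro e hc
      have : e ∈ ({} : Set ℕ) := hempty ▸ hc
      exact this
    refine ⟨(I \ {Sfact q}) ∪ {Sfact q'}, H,
      ⟨ifzAct q i q', ⟨q, q', i, Or.inr (Or.inr ⟨hprog, rfl⟩)⟩, id,
        fun u hu => absurd hu (Set.notMem_empty u),
        fun v hv => absurd hv (by simp [ifzAct]),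
        by rw [freshSet_ifz]; exact Set.injOn_empty _,
        ⟨(hG.1 q).mpr rfl, hnone⟩, ?_, ?_⟩, ?_⟩
    · rw [show (ifzAct q i q').Del = ({Sfact q} : DBInst (schemaCM Q) ℕ) from rfl,
          show (ifzAct q i q').Add = ({Sfact q'} : DBInst (schemaCM Q) ℕ) from rfl,
          substDB_singleton_S, substDB_singleton_S]
    · rw [freshSet_ifz, Set.image_empty, Set.union_empty]
    · have hV2 : V' = V := hV'
      rw [hV2]
      exact good_ifz hG q'

theorem dms_good (c : DBInst (schemaCM Q) ℕ × Set ℕ) (h : DMSReach (dmsOfCM M) c) :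
    ∃ q V, CMReach M (M.q0, fun _ => 0) (q, V) ∧ Good q V c.1 c.2 := by
  induction h with
  | refl => exact ⟨M.q0, fun _ => 0, Relation.ReflTransGen.refl, good_init M.q0⟩
  | tail hr hstep ih =>
    obtain ⟨q, V, hcm, hG⟩ := ih
    obtain ⟨α, hα, σ, hs⟩ := hstep
    obtain ⟨q', V', hstep', hG'⟩ := step_backward M hG hα hs
    exact ⟨q', V', hcm.tail hstep', hG'⟩

theorem cm_dms (c : Q × (Fin 2 → ℕ)) (h : CMReach M (M.q0, fun _ => 0) c) :
    ∃ I H, DMSReach (dmsOfCM M) (I, H) ∧ Good c.1 c.2 I H := by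
  induction h with
  | refl =>
    exact ⟨{Sfact M.q0}, ∅, Relation.ReflTransGen.refl, good_init M.q0⟩
  | @tail b c hr hstep ih =>
    obtain ⟨I, H, hdms, hG⟩ := ih
    have hstep' : CMStep M (b.1, b.2) (c.1, c.2) := hstep
    obtain ⟨I', H', ⟨α, hα, σ, hs⟩, hG'⟩ := step_forward M hstep' hG
    exact ⟨I', H', hdms.tail ⟨α, hα, σ, hs⟩, hG'⟩

end Main

/-- Correctness of the simulation: a machine configuration `⟨q, V⟩` is
reachable from `⟨q₀, 0⟩` iff the DMS reaches a configuration `⟨I, H⟩` with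
`S_q ∈ I` and `|C_i^I| = V i` for both counters. In particular, a control state
`q_f` is reachable in the machine iff the proposition `S_{q_f}` is reachable in
the DMS. -/
theorem cm_dms_simulation {Q : Type*} (M : CM Q) :
    (∀ (q : Q) (V : Fin 2 → ℕ),
      CMReach M (M.q0, fun _ => 0) (q, V) ↔
      ∃ (I : DBInst (schemaCM Q) ℕ) (H : Set ℕ),
        DMSReach (dmsOfCM M) (I, H) ∧ Sfact q ∈ I ∧
        ∀ i : Fin 2, {e : ℕ | Cfact i e ∈ I}.ncard = V i) ∧
    (∀ qf : Q,
      (∃ V, CMReach M (M.q0, fun _ => 0) (qf, V)) ↔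
      ∃ (I : DBInst (schemaCM Q) ℕ) (H : Set ℕ),
        DMSReach (dmsOfCM M) (I, H) ∧ Sfact qf ∈ I) := by
  have main : ∀ (q : Q) (V : Fin 2 → ℕ),
      CMReach M (M.q0, fun _ => 0) (q, V) ↔
      ∃ (I : DBInst (schemaCM Q) ℕ) (H : Set ℕ),
        DMSReach (dmsOfCM M) (I, H) ∧ Sfact q ∈ I ∧
        ∀ i : Fin 2, {e : ℕ | Cfact i e ∈ I}.ncard = V i := by
    intro q V
    constructor
    · intro h
      obtain ⟨I, H, hdms, hG⟩ := cm_dms M (q, V) h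
      exact ⟨I, H, hdms, (hG.1 q).mpr rfl, hG.2.2.1⟩
    · rintro ⟨I, H, hdms, hSq, hc⟩
      obtain ⟨q1, V1, hcm, hG⟩ := dms_good M (I, H) hdms
      have hq : q = q1 := (hG.1 q).mp hSq
      subst hq
      have hV : V1 = V := funext fun i => by rw [← hG.2.2.1 i, hc i]
      rwa [hV] at hcm
  refine ⟨main, fun qf => ⟨?_, ?_⟩⟩
  · rintro ⟨V, h⟩
    obtain ⟨I, H, hdms, hSq, -⟩ := (main qf V).mp h
    exact ⟨I, H, hdms, hSq⟩
  · rintro ⟨I, H, hdms, hSq⟩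
    obtain ⟨q1, V1, hcm, hG⟩ := dms_good M (I, H) hdms
    have hq : qf = q1 := (hG.1 qf).mp hSq
    subst hq
    exact ⟨V1, hcm⟩
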